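/- The map sending an independent set I = (S ∪ IP(C)), where C is the basis related to I and S ⊆ IA(C), to (IA(C) \ S) ∪ IP(C), is a well-defined involutive bijection from the set of independent sets of M to itself. -/

import Mathlib

open Set

variable {α : Type*}

/-- A circuit of a matroid: a minimal dependent set. -/
def Matroid.Cct (M : Matroid α) (C : Set α) : Prop :=
  M.Dep C ∧ ∀ D ⊂ C, ¬ M.Dep D

/-- The externally active elements with respect to `S`: elements `e ∈ E \ S` that are the
maximum of some circuit contained in `S ∪ {e}`. -/
def Matroid.exA [LinearOrder α] (M : Matroid α) (S : Set α) : Set α :=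
  {e | e ∈ M.E \ S ∧ ∃ C, M.Cct C ∧ C ⊆ insert e S ∧ ∀ f ∈ C, f ≤ e}

/-- The externally passive elements with respect to `S`. -/
def Matroid.exP [LinearOrder α] (M : Matroid α) (S : Set α) : Set α :=
  (M.E \ S) \ M.exA S

/-- The internally active elements with respect to `S`: elements of `S` that are externally
active with respect to `E \ S` in the dual matroid. -/
def Matroid.inA [LinearOrder α] (M : Matroid α) (S : Set α) : Set α :=
  {i | i ∈ S ∧ i ∈ M✶.exA (M.E \ S)}

/-- The internally passive elements with respect to `S`. -/
def Matroid.inP [LinearOrder α] (M : Matroid α) (S : Set α) : Set α :=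
  S \ M.inA S

/-- `I` is internally related to the basis `B` if `I = B \ Y` for some `Y ⊆ IA(B)`. -/
def Matroid.IntRelated [LinearOrder α] (M : Matroid α) (I B : Set α) : Prop :=
  M.IsBase B ∧ ∃ Y ⊆ M.inA B, I = B \ Y

/-- The external/internal order on independent sets. -/
def Matroid.extIntLE [LinearOrder α] (M : Matroid α) (I J : Set α) : Prop :=
  ((∃ B, M.IntRelated I B ∧ M.IntRelated J B) ∧ I ⊆ J) ∨
  ((¬ ∃ B, M.IntRelated I B ∧ M.IntRelated J B) ∧
    (I \ M.inA I) ∪ M.exA I ⊆ (J \ M.inA J) ∪ M.exA J)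

section Aux

variable [LinearOrder α]

/-- Every finite dependent set contains a circuit. -/
lemma Matroid.exists_cct_subset (M : Matroid α) {D : Set α} (hD : M.Dep D)
    (hfin : D.Finite) : ∃ C ⊆ D, M.Cct C := by
  have hsfin : {C | C ⊆ D ∧ M.Dep C}.Finite :=
    hfin.powerset.subset fun C hC => hC.1
  obtain ⟨C, hC, hmin⟩ := Set.Finite.exists_minimalFor id _ hsfin ⟨D, Subset.rfl, hD⟩
  refine ⟨C, hC.1, hC.2, fun D' hD' hdep => ?_⟩
  exact hD'.ne (Subset.antisymm hD'.subset (hmin ⟨hD'.subset.trans hC.1, hdep⟩ hD'.subset))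

lemma Matroid.inA_subset (M : Matroid α) (S : Set α) : M.inA S ⊆ S := fun _ h => h.1

/-- Existence of the basis internally related to an independent set. -/
lemma Matroid.exists_related_base (M : Matroid α) [M.Finite] {I : Set α} (hI : M.Indep I) :
    ∃ B, M.IsBase B ∧ I ⊆ B ∧ B \ I ⊆ M.inA B := by
  classical
  have hE : M.E.Finite := M.ground_finite
  set F : Finset α := hE.toFinset with hF
  have hmemF : ∀ {x : α}, x ∈ F ↔ x ∈ M.E := fun {x} => hE.mem_toFinset
  set idx : α → ℕ := fun x => (F.filter (· ≤ x)).card with hidx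
  have hidx_mono : ∀ {i e : α}, e ∈ M.E → i < e → idx i < idx e := by
    intro i e he hie
    apply Finset.card_lt_card
    constructor
    · intro x hx
      rw [Finset.mem_filter] at hx ⊢
      exact ⟨hx.1, le_of_lt (lt_of_le_of_lt hx.2 hie)⟩
    · intro hsub
      have : e ∈ F.filter (· ≤ e) := Finset.mem_filter.2 ⟨hmemF.2 he, le_refl e⟩
      have := Finset.mem_filter.1 (hsub this)
      exact absurd this.2 (not_le.2 hie)
  set Ffin : Set α → Finset α := fun B => F.filter (fun x => x ∈ B) with hFfin
  set W : Set α → ℕ := fun B => ∑ x ∈ Ffin B, idx x with hW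
  have hsfin : {B | M.IsBase B ∧ I ⊆ B}.Finite :=
    hE.powerset.subset fun B hB => hB.1.subset_ground
  have hsne : {B | M.IsBase B ∧ I ⊆ B}.Nonempty := by
    obtain ⟨B, hB, hIB⟩ := hI.exists_isBase_superset
    exact ⟨B, hB, hIB⟩
  obtain ⟨B, hBs, hmax⟩ := Set.Finite.exists_maximalFor W _ hsfin hsne
  obtain ⟨hB, hIB⟩ := hBs
  refine ⟨B, hB, hIB, ?_⟩
  intro i hi
  have hiE : i ∈ M.E := hB.subset_ground hi.1
  refine ⟨hi.1, ⟨hiE, fun h => h.2 hi.1⟩, ?_⟩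
  -- we must find a dual circuit in `insert i ((M.E \ B) ∩ Iic i)`
  have hdep : M✶.Dep (insert i ((M.E \ B) ∩ Iic i)) := by
    rw [Matroid.dep_iff]
    constructor
    · intro hind
      rw [Matroid.dual_indep_iff_exists'] at hind
      obtain ⟨-, B'', hB'', hdisj⟩ := hind
      have hiB'' : i ∉ B'' := fun h => hdisj.ne_of_mem (mem_insert _ _) h rfl
      obtain ⟨e, he, hB₂⟩ := hB.exchange hB'' ⟨hi.1, hiB''⟩
      have heE : e ∈ M.E := hB''.subset_ground he.1
      have hie : i < e := by
        by_contra h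
        exact hdisj.ne_of_mem
          (mem_insert_of_mem _ ⟨⟨heE, he.2⟩, not_lt.1 h⟩) he.1 rfl
      have hB₂s : insert e (B \ {i}) ∈ {B | M.IsBase B ∧ I ⊆ B} := by
        refine ⟨hB₂, fun x hx => ?_⟩
        exact mem_insert_of_mem _ ⟨hIB hx, fun hxi => hi.2 (hxi ▸ hx)⟩
      have hfilter : Ffin (insert e (B \ ({i} : Set α)))
          = insert e ((Ffin B).erase i) := by
        ext x
        simp only [hFfin, Finset.mem_filter, Set.mem_insert_iff, Set.mem_diff,
          Set.mem_singleton_iff, Finset.mem_insert, Finset.mem_erase]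
        constructor
        · rintro ⟨hxF, rfl | ⟨hxB, hxi⟩⟩
          · exact Or.inl rfl
          · exact Or.inr ⟨hxi, hxF, hxB⟩
        · rintro (rfl | ⟨hxi, hxF, hxB⟩)
          · exact ⟨hmemF.2 heE, Or.inl rfl⟩
          · exact ⟨hxF, Or.inr ⟨hxB, hxi⟩⟩
      have hiF : i ∈ Ffin B := Finset.mem_filter.2 ⟨hmemF.2 hiE, hi.1⟩
      have heF : e ∉ (Ffin B).erase i := by
        intro h
        exact he.2 (Finset.mem_filter.1 (Finset.mem_of_mem_erase h)).2
      have hWlt : W B < W (insert e (B \ {i})) := by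
        show ∑ x ∈ Ffin B, idx x < ∑ x ∈ Ffin (insert e (B \ {i})), idx x
        rw [hfilter, Finset.sum_insert heF, ← Finset.add_sum_erase _ idx hiF]
        exact Nat.add_lt_add_right (hidx_mono heE hie) _
      exact absurd (hmax hB₂s (le_of_lt hWlt)) (not_le.2 hWlt)
    · rw [Matroid.dual_ground]
      exact insert_subset hiE ((inter_subset_left).trans diff_subset)
  obtain ⟨C, hCsub, hC⟩ := M✶.exists_cct_subset hdep
    (hE.subset (hdep.subset_ground.trans_eq (Matroid.dual_ground)))
  refine ⟨C, hC, hCsub.trans ?_, fun f hf => ?_⟩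
  · exact insert_subset_insert inter_subset_left
  · rcases hCsub hf with h | h
    · exact le_of_eq h
    · exact h.2

/-- Key step for uniqueness: if `d ∈ B \ B'` is justified by internal activity,
there is a smaller element of `B' \ B`. -/
lemma Matroid.exists_smaller (M : Matroid α) {I B B' : Set α} {d : α}
    (hB : M.IsBase B) (hA : B \ I ⊆ M.inA B)
    (hB' : M.IsBase B') (hIB' : I ⊆ B') (hd : d ∈ B \ B') :
    ∃ e ∈ B' \ B, e < d := by
  have hdI : d ∉ I := fun h => hd.2 (hIB' h)
  obtain ⟨-, -, C, hC, hCsub, hCle⟩ := hA ⟨hd.1, hdI⟩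
  have hCE : C ⊆ M.E := hC.1.subset_ground.trans_eq (Matroid.dual_ground)
  have hCB' : (C ∩ B').Nonempty := by
    by_contra h
    rw [Set.not_nonempty_iff_eq_empty] at h
    have hsub : C ⊆ M.E \ B' := fun x hx =>
      ⟨hCE hx, fun hxB' => (Set.eq_empty_iff_forall_notMem.1 h x) ⟨hx, hxB'⟩⟩
    have : M✶.Indep C := hB'.compl_isBase_dual.indep.subset hsub
    exact (Matroid.dep_iff.1 hC.1).1 this
  obtain ⟨e, heC, heB'⟩ := hCB'
  have hed : e ≠ d := fun h => hd.2 (h ▸ heB')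
  have heB : e ∉ B := by
    rcases hCsub heC with h | h
    · exact absurd h hed
    · exact h.2
  exact ⟨e, ⟨heB', heB⟩, lt_of_le_of_ne (hCle e heC) hed⟩

/-- Uniqueness of the basis internally related to an independent set. -/
lemma Matroid.related_base_unique (M : Matroid α) [M.Finite] {I B B' : Set α}
    (hB : M.IsBase B) (hIB : I ⊆ B) (hA : B \ I ⊆ M.inA B)
    (hB' : M.IsBase B') (hIB' : I ⊆ B') (hA' : B' \ I ⊆ M.inA B') : B = B' := by
  by_contra hne
  have hΔne : ((B \ B') ∪ (B' \ B)).Nonempty := by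
    by_contra h
    rw [Set.not_nonempty_iff_eq_empty, Set.union_empty_iff,
      Set.diff_eq_empty, Set.diff_eq_empty] at h
    exact hne (Set.Subset.antisymm h.1 h.2)
  have hΔfin : ((B \ B') ∪ (B' \ B)).Finite :=
    ((M.ground_finite.subset hB.subset_ground).diff).union
      ((M.ground_finite.subset hB'.subset_ground).diff)
  obtain ⟨d, hd, hdmin⟩ := Set.exists_min_image _ id hΔfin hΔne
  rcases hd with hd | hd
  · obtain ⟨e, he, helt⟩ := M.exists_smaller hB hA hB' hIB' hd
    exact absurd (hdmin e (Or.inr he)) (not_le.2 helt)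
  · obtain ⟨e, he, helt⟩ := M.exists_smaller hB' hA' hB hIB hd
    exact absurd (hdmin e (Or.inl he)) (not_le.2 helt)

lemma Matroid.rel_of_base_subset (M : Matroid α) {C S : Set α} (hC : M.IsBase C)
    (hS : S ⊆ M.inA C) :
    M.IsBase C ∧ S ∪ M.inP C ⊆ C ∧ C \ (S ∪ M.inP C) ⊆ M.inA C := by
  refine ⟨hC, ?_, ?_⟩
  · exact Set.union_subset (hS.trans (M.inA_subset C)) Set.diff_subset
  · rintro x ⟨hxC, hx⟩
    rw [Set.mem_union] at hx
    push_neg at hx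
    by_contra hxA
    exact hx.2 ⟨hxC, hxA⟩

end Aux

/-- The map `S ∪ IP(C) ↦ (IA(C) \ S) ∪ IP(C)` (where `C` is the basis related to the
independent set) is a well-defined involutive bijection of the independent sets. -/
theorem flip_involution [LinearOrder α] (M : Matroid α) [M.Finite] :
    ∃ f : Set α → Set α,
      (∀ C, M.IsBase C → ∀ S ⊆ M.inA C, f (S ∪ M.inP C) = (M.inA C \ S) ∪ M.inP C) ∧
      (∀ I, M.Indep I → M.Indep (f I) ∧ f (f I) = I) := by
  classical
  set Rel : Set α → Set α → Prop := fun I B => M.IsBase B ∧ I ⊆ B ∧ B \ I ⊆ M.inA B with hRel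
  set f : Set α → Set α := fun I =>
    if h : ∃ B, Rel I B then h.choose \ (I ∩ M.inA h.choose) else I with hf
  have key : ∀ C, M.IsBase C → ∀ S ⊆ M.inA C,
      f (S ∪ M.inP C) = (M.inA C \ S) ∪ M.inP C := by
    intro C hC S hS
    have hrel : Rel (S ∪ M.inP C) C := M.rel_of_base_subset hC hS
    have hex : ∃ B, Rel (S ∪ M.inP C) B := ⟨C, hrel⟩
    have hcs := hex.choose_spec
    have hceq : hex.choose = C :=
      M.related_base_unique hcs.1 hcs.2.1 hcs.2.2 hrel.1 hrel.2.1 hrel.2.2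
    rw [hf]
    simp only [dif_pos hex, hceq]
    ext x
    have h1 : x ∈ S → x ∈ M.inA C := fun h => hS h
    have h2 : x ∈ M.inA C → x ∈ C := fun h => h.1
    simp only [Set.mem_diff, Set.mem_union, Set.mem_inter_iff, Matroid.inP]
    tauto
  refine ⟨f, key, ?_⟩
  intro I hI
  have hex : ∃ B, Rel I B := M.exists_related_base hI
  obtain ⟨hB, hIB, hBA⟩ := hex.choose_spec
  set B := hex.choose with hBdef
  have hfI : f I = B \ (I ∩ M.inA B) := by rw [hf]; simp only [dif_pos hex]; rfl
  constructor
  · rw [hfI]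
    exact hB.indep.subset Set.diff_subset
  · have hfI2 : f I = (M.inA B \ (I ∩ M.inA B)) ∪ M.inP B := by
      rw [hfI]
      ext x
      have h2 : x ∈ M.inA B → x ∈ B := fun h => h.1
      simp only [Set.mem_diff, Set.mem_union, Set.mem_inter_iff, Matroid.inP]
      tauto
    rw [hfI2, key B hB _ Set.diff_subset]
    ext x
    have h1 : x ∈ I → x ∈ B := fun h => hIB h
    have h2 : x ∈ B → x ∉ I → x ∈ M.inA B := fun ha hb => hBA ⟨ha, hb⟩
    have h3 : x ∈ M.inA B → x ∈ B := fun h => h.1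
    simp only [Set.mem_diff, Set.mem_union, Set.mem_inter_iff, Matroid.inP]
    tauto
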